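/- For the point q = (q₁,q₂,q₃,q₄) on the unit sphere S³ ⊂ ℝ⁴ with q₄ < 0, centrally projected to q̃ = (x,y,z) = (−q₁/q₄, −q₂/q₄, −q₃/q₄), and with Z̃₁ = (a,0,0), Z̃₂ = (−a,0,0), the following identities hold: ‖q̃ − Z̃₁‖_a = ‖q̃ − Z̃₁‖ · ‖G₁‖/√(1+a²) where ‖·‖_a is the norm with ‖(x,y,z)‖_a² = x²/(1+a²)+y²+z², ‖·‖ is the Euclidean norm in the hyperplane {q₄ = −1} ⊂ ℝ⁴, G₁ is the foot of the perpendicular from the origin of ℝ⁴ to the line through (a,0,0,−1) and (x,y,z,−1). The analogous identity holds for Z̃₂. -/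

import Mathlib

lemma key12 (a x y z t : ℝ) (w Z G : EuclideanSpace ℝ (Fin 4))
    (hw : w = (WithLp.equiv 2 (Fin 4 → ℝ)).symm ![x, y, z, -1])
    (hZ : Z = (WithLp.equiv 2 (Fin 4 → ℝ)).symm ![a, 0, 0, -1])
    (hG : G = Z + t • (w - Z))
    (hperp : (inner ℝ G (w - Z) : ℝ) = 0) :
    Real.sqrt ((x - a)^2/(1+a^2) + y^2 + z^2) = ‖w - Z‖ * ‖G‖ / Real.sqrt (1+a^2) := by
  subst hw hZ hG
  have ha : (0:ℝ) < 1 + a^2 := by positivity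
  have hp : a*(x-a) + t*((x-a)^2 + y^2 + z^2) = 0 := by
    simp [PiLp.inner_apply, Fin.sum_univ_four] at hperp
    linear_combination hperp
  set W : EuclideanSpace ℝ (Fin 4) := (WithLp.equiv 2 (Fin 4 → ℝ)).symm ![x, y, z, -1]
  set Z : EuclideanSpace ℝ (Fin 4) := (WithLp.equiv 2 (Fin 4 → ℝ)).symm ![a, 0, 0, -1]
  have hA : ‖W - Z‖^2 = (x-a)^2 + y^2 + z^2 := by
    rw [EuclideanSpace.norm_sq_eq]
    simp [W, Z, PiLp.inner_apply, Fin.sum_univ_four]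
  have hB : ‖Z + t • (W - Z)‖^2 = (a + t*(x-a))^2 + (t*y)^2 + (t*z)^2 + 1 := by
    rw [EuclideanSpace.norm_sq_eq]
    simp [W, Z, PiLp.inner_apply, Fin.sum_univ_four]
  have hRHS : ‖W - Z‖ * ‖Z + t • (W - Z)‖ / Real.sqrt (1+a^2)
      = Real.sqrt (‖W - Z‖^2 * ‖Z + t • (W - Z)‖^2 / (1+a^2)) := by
    rw [show ‖W - Z‖^2 * ‖Z + t • (W - Z)‖^2 / (1+a^2)
        = (‖W - Z‖ * ‖Z + t • (W - Z)‖ / Real.sqrt (1+a^2))^2 by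
      rw [div_pow, mul_pow, Real.sq_sqrt ha.le]]
    rw [Real.sqrt_sq (by positivity)]
  rw [hRHS, hA, hB]
  congr 1
  field_simp
  ring_nf
  nlinarith [hp, sq_nonneg (x-a), sq_nonneg t]

/-- For `q ∈ S³` with `q₄ < 0` centrally projected to
`q̃ = (x,y,z) = (−q₁/q₄, −q₂/q₄, −q₃/q₄)`, with Kepler centers `Z̃₁ = (a,0,0)`,
`Z̃₂ = (−a,0,0)` in the hyperplane `{q₄ = −1}`, and `Gᵢ` the foot of the perpendicular
from the origin of `ℝ⁴` to the line through `Z̃ᵢ` and `q̃`, one has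
`‖q̃ − Z̃ᵢ‖_a = ‖q̃ − Z̃ᵢ‖ · ‖Gᵢ‖ / √(1+a²)` where `‖(x,y,z)‖_a² = x²/(1+a²) + y² + z²`. -/
theorem stmt_12 (a x y z t₁ t₂ : ℝ)
    (q w Z₁ Z₂ G₁ G₂ : EuclideanSpace ℝ (Fin 4))
    (hq : ‖q‖ = 1) (hq4 : q 3 < 0)
    (hx : x = -(q 0)/(q 3)) (hy : y = -(q 1)/(q 3)) (hz : z = -(q 2)/(q 3))
    (hw : w = (WithLp.equiv 2 (Fin 4 → ℝ)).symm ![x, y, z, -1])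
    (hZ₁ : Z₁ = (WithLp.equiv 2 (Fin 4 → ℝ)).symm ![a, 0, 0, -1])
    (hZ₂ : Z₂ = (WithLp.equiv 2 (Fin 4 → ℝ)).symm ![-a, 0, 0, -1])
    (hG₁ : G₁ = Z₁ + t₁ • (w - Z₁)) (hG₂ : G₂ = Z₂ + t₂ • (w - Z₂))
    (hperp₁ : (inner ℝ G₁ (w - Z₁) : ℝ) = 0) (hperp₂ : (inner ℝ G₂ (w - Z₂) : ℝ) = 0) :
    Real.sqrt ((x - a)^2/(1+a^2) + y^2 + z^2)
        = ‖w - Z₁‖ * ‖G₁‖ / Real.sqrt (1+a^2) ∧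
    Real.sqrt ((x + a)^2/(1+a^2) + y^2 + z^2)
        = ‖w - Z₂‖ * ‖G₂‖ / Real.sqrt (1+a^2) := by
  constructor
  · exact key12 a x y z t₁ w Z₁ G₁ hw hZ₁ hG₁ hperp₁
  · have h := key12 (-a) x y z t₂ w Z₂ G₂ hw hZ₂ hG₂ hperp₂
    simpa [neg_neg, sub_neg_eq_add, neg_sq] using h
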